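/- Let p₁, p₂, p₃ be real numbers with p₁ + p₂ + p₃ = 1. The map Φ_p is positive (i.e. Φ_p(A) is positive semidefinite whenever A ∈ M₂(ℂ) is positive semidefinite) if and only if |pₖ| ≤ 1 for k = 1, 2, 3. -/

import Mathlib

open Matrix
open scoped ComplexOrder

/-- The three Pauli matrices in `M₂(ℂ)`. -/
def pauli : Fin 3 → Matrix (Fin 2) (Fin 2) ℂ
  | 0 => !![0, 1; 1, 0]
  | 1 => !![0, -Complex.I; Complex.I, 0]
  | 2 => !![1, 0; 0, -1]

/-- The unital linear map `Φ_p` with `Φ_p(I) = I` and `Φ_p(σₖ) = pₖ σₖ`, given by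
`Φ_p(X) = ½ Tr(X) I + ½ Σₖ pₖ Tr(σₖ X) σₖ`. -/
noncomputable def PhiP (p : Fin 3 → ℝ) (X : Matrix (Fin 2) (Fin 2) ℂ) :
    Matrix (Fin 2) (Fin 2) ℂ :=
  (1 / 2 : ℂ) • (X.trace • (1 : Matrix (Fin 2) (Fin 2) ℂ)
    + ∑ k, ((p k : ℂ) * (pauli k * X).trace) • pauli k)

lemma PhiP_apply (p : Fin 3 → ℝ) (a b c d : ℂ) :
    PhiP p !![a, b; c, d] =
      !![((1 + (p 2 : ℂ)) * a + (1 - (p 2 : ℂ)) * d) / 2,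
         (((p 0 : ℂ) + (p 1 : ℂ)) * b + ((p 0 : ℂ) - (p 1 : ℂ)) * c) / 2;
         (((p 0 : ℂ) - (p 1 : ℂ)) * b + ((p 0 : ℂ) + (p 1 : ℂ)) * c) / 2,
         ((1 - (p 2 : ℂ)) * a + (1 + (p 2 : ℂ)) * d) / 2] := by
  ext i j
  fin_cases i <;> fin_cases j <;>
    simp [PhiP, pauli, Fin.sum_univ_three, Matrix.trace_fin_two, Matrix.mul_apply,
      Fin.sum_univ_two, Matrix.one_apply] <;> ring_nf <;> simp [Complex.I_sq] <;> ring

lemma quad_nonneg (a d : ℝ) (ha : 0 ≤ a) (hd : 0 ≤ d) (b x y : ℂ)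
    (hb : Complex.normSq b ≤ a * d) :
    0 ≤ a * Complex.normSq x + 2 * ((starRingEnd ℂ) x * b * y).re + d * Complex.normSq y := by
  set w := (starRingEnd ℂ) x * b * y with hw
  have h1 : -‖w‖ ≤ w.re :=
    (neg_le_neg (Complex.abs_re_le_norm w)).trans (neg_abs_le w.re)
  have h2 : ‖w‖ = ‖b‖ * (‖x‖ * ‖y‖) := by
    rw [hw, norm_mul, norm_mul, Complex.norm_conj]; ring
  have hx : Complex.normSq x = ‖x‖ ^ 2 := (Complex.sq_norm x).symm
  have hy : Complex.normSq y = ‖y‖ ^ 2 := (Complex.sq_norm y).symm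
  have hbb : Complex.normSq b = ‖b‖ ^ 2 := (Complex.sq_norm b).symm
  set u := ‖x‖
  set v := ‖y‖
  set t := ‖b‖
  have hu : 0 ≤ u := norm_nonneg x
  have hv : 0 ≤ v := norm_nonneg y
  have ht : 0 ≤ t := norm_nonneg b
  have h3 : t ^ 2 * (u * v) ^ 2 ≤ a * d * (u * v) ^ 2 :=
    mul_le_mul_of_nonneg_right (hbb ▸ hb) (sq_nonneg (u * v))
  have key : 2 * (t * (u * v)) ≤ a * u ^ 2 + d * v ^ 2 := by
    nlinarith [h3, sq_nonneg (a * u ^ 2 - d * v ^ 2), mul_nonneg ha (sq_nonneg u),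
      mul_nonneg hd (sq_nonneg v), mul_nonneg (mul_nonneg ht hu) hv]
  rw [hx, hy]
  nlinarith [h1, h2, key]

lemma posSemidef_of_entries (a d : ℝ) (b : ℂ) (ha : 0 ≤ a) (hd : 0 ≤ d)
    (hb : Complex.normSq b ≤ a * d) :
    (!![(a : ℂ), b; (starRingEnd ℂ) b, (d : ℂ)]).PosSemidef := by
  rw [Matrix.posSemidef_iff_dotProduct_mulVec]
  constructor
  · ext i j
    fin_cases i <;> fin_cases j <;>
      simp [Matrix.IsHermitian, conjTranspose, Matrix.map, Complex.ext_iff]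
  · intro x
    have hform : dotProduct (star x) ((!![(a : ℂ), b; (starRingEnd ℂ) b, (d : ℂ)]) *ᵥ x) =
        ((a * Complex.normSq (x 0) + 2 * ((starRingEnd ℂ) (x 0) * b * (x 1)).re
          + d * Complex.normSq (x 1) : ℝ) : ℂ) := by
      simp [dotProduct, mulVec, Fin.sum_univ_two, Complex.ext_iff, Complex.normSq_apply,
        Complex.mul_re, Complex.mul_im, Complex.add_re, Complex.add_im]
      constructor <;> ring
    rw [hform]
    rw [Complex.zero_le_real]
    exact quad_nonneg a d ha hd b (x 0) (x 1) hb

lemma entries_of_posSemidef (a b c d : ℂ) (h : (!![a, b; c, d]).PosSemidef) :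
    a.im = 0 ∧ 0 ≤ a.re ∧ d.im = 0 ∧ 0 ≤ d.re ∧ c = (starRingEnd ℂ) b ∧
      Complex.normSq b ≤ a.re * d.re := by
  have herm := h.1
  have hca : (starRingEnd ℂ) a = a := by
    have := congrFun (congrFun herm 0) 0
    simpa [conjTranspose, Matrix.map] using this
  have hcd : (starRingEnd ℂ) d = d := by
    have := congrFun (congrFun herm 1) 1
    simpa [conjTranspose, Matrix.map] using this
  have hc : c = (starRingEnd ℂ) b := by
    have h2 : b = (starRingEnd ℂ) c := by
      have := congrFun (congrFun herm 0) 1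
      simpa [conjTranspose, Matrix.map] using this.symm
    rw [h2]; simp
  have haim : a.im = 0 := by
    have h2 := congr_arg Complex.im hca
    simp [Complex.conj_im] at h2; linarith
  have hdim : d.im = 0 := by
    have h2 := congr_arg Complex.im hcd
    simp [Complex.conj_im] at h2; linarith
  have ha : 0 ≤ a.re := by
    have h0 := h.dotProduct_mulVec_nonneg ![1, 0]
    rw [Complex.le_def] at h0
    simp only [Complex.zero_re, Complex.zero_im] at h0
    have := h0.1
    simpa [dotProduct, mulVec, Fin.sum_univ_two] using this
  have hd : 0 ≤ d.re := by
    have h0 := h.dotProduct_mulVec_nonneg ![0, 1]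
    rw [Complex.le_def] at h0
    simp only [Complex.zero_re, Complex.zero_im] at h0
    have := h0.1
    simpa [dotProduct, mulVec, Fin.sum_univ_two] using this
  refine ⟨haim, ha, hdim, hd, hc, ?_⟩
  rcases lt_or_eq_of_le ha with hapos | haz
  · have h0 := h.dotProduct_mulVec_nonneg ![b, -(a.re : ℂ)]
    rw [Complex.le_def] at h0
    simp only [Complex.zero_re, Complex.zero_im] at h0
    have h1 := h0.1
    have hre : (dotProduct (star ![b, -(a.re : ℂ)])
        ((!![a, b; c, d]) *ᵥ ![b, -(a.re : ℂ)])).re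
        = a.re * (a.re * d.re - Complex.normSq b) := by
      subst hc
      simp [dotProduct, mulVec, Fin.sum_univ_two, Complex.mul_re, Complex.mul_im,
        Complex.normSq_apply]
      nlinarith [haim, hdim]
    rw [hre] at h1
    nlinarith [h1, hapos]
  · rcases eq_or_lt_of_le (Complex.normSq_nonneg b) with hb0 | hbpos
    · rw [← hb0]; positivity
    · exfalso
      set s : ℝ := -(d.re + 1) / (2 * Complex.normSq b) with hs
      have h0 := h.dotProduct_mulVec_nonneg ![(s : ℂ) * b, 1]
      rw [Complex.le_def] at h0
      simp only [Complex.zero_re, Complex.zero_im] at h0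
      have h1 := h0.1
      have hre : (dotProduct (star ![(s : ℂ) * b, 1])
          ((!![a, b; c, d]) *ᵥ ![(s : ℂ) * b, 1])).re
          = a.re * s ^ 2 * Complex.normSq b + 2 * s * Complex.normSq b + d.re := by
        subst hc
        simp [dotProduct, mulVec, Fin.sum_univ_two, Complex.mul_re, Complex.mul_im,
          Complex.normSq_apply]
        nlinarith [haim, hdim]
      rw [hre, ← haz] at h1
      have : 2 * s * Complex.normSq b = -(d.re + 1) := by
        rw [hs]; field_simp
      nlinarith [h1, this]

/-- for `p₁ + p₂ + p₃ = 1`, the map `Φ_p` is positive iff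
`|pₖ| ≤ 1` for `k = 1, 2, 3`. -/
theorem stmt_9 (p : Fin 3 → ℝ) (hsum : p 0 + p 1 + p 2 = 1) :
    (∀ A : Matrix (Fin 2) (Fin 2) ℂ, A.PosSemidef → (PhiP p A).PosSemidef) ↔
      (∀ k, |p k| ≤ 1) := by
  constructor
  · intro hpos k
    fin_cases k
    · -- k = 0
      show |p 0| ≤ 1
      have hA : (!![(1 : ℂ), 1; 1, 1]).PosSemidef := by
        have := posSemidef_of_entries 1 1 1 one_pos.le one_pos.le (by norm_num)
        simpa using this
      have e : PhiP p !![(1 : ℂ), 1; 1, 1] = !![1, (p 0 : ℂ); (p 0 : ℂ), 1] := by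
        rw [PhiP_apply]
        ext i j
        fin_cases i <;> fin_cases j <;> simp <;> ring
      have h2 := hpos _ hA
      rw [e] at h2
      obtain ⟨_, _, _, _, _, hkey⟩ := entries_of_posSemidef _ _ _ _ h2
      simp [Complex.normSq_ofReal] at hkey
      rw [abs_le]; constructor <;> nlinarith [hkey]
    · -- k = 1
      show |p 1| ≤ 1
      have hA : (!![(1 : ℂ), -Complex.I; Complex.I, 1]).PosSemidef := by
        have := posSemidef_of_entries 1 1 (-Complex.I) one_pos.le one_pos.le (by norm_num)
        simpa using this
      have e : PhiP p !![(1 : ℂ), -Complex.I; Complex.I, 1]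
          = !![1, -(p 1 : ℂ) * Complex.I; (p 1 : ℂ) * Complex.I, 1] := by
        rw [PhiP_apply]
        ext i j
        fin_cases i <;> fin_cases j <;> simp <;> ring
      have h2 := hpos _ hA
      rw [e] at h2
      obtain ⟨_, _, _, _, _, hkey⟩ := entries_of_posSemidef _ _ _ _ h2
      simp [Complex.normSq_apply] at hkey
      rw [abs_le]; constructor <;> nlinarith [hkey]
    · -- k = 2
      show |p 2| ≤ 1
      have hA : (!![(2 : ℂ), 0; 0, 0]).PosSemidef := by
        have := posSemidef_of_entries 2 0 0 (by norm_num) le_rfl (by norm_num)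
        simpa using this
      have e : PhiP p !![(2 : ℂ), 0; 0, 0]
          = !![1 + (p 2 : ℂ), 0; 0, 1 - (p 2 : ℂ)] := by
        rw [PhiP_apply]
        ext i j
        fin_cases i <;> fin_cases j <;> simp <;> ring
      have h2 := hpos _ hA
      rw [e] at h2
      obtain ⟨_, ha, _, hd, _, _⟩ := entries_of_posSemidef _ _ _ _ h2
      simp [Complex.add_re, Complex.sub_re] at ha hd
      rw [abs_le]; exact ⟨by linarith, by linarith⟩
  · intro hk A hA
    rw [Matrix.eta_fin_two A] at hA ⊢
    obtain ⟨haim, ha, hdim, hd, hc, hb⟩ := entries_of_posSemidef _ _ _ _ hA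
    have hA00 : A 0 0 = ((A 0 0).re : ℂ) := Complex.ext rfl haim
    have hA11 : A 1 1 = ((A 1 1).re : ℂ) := Complex.ext rfl hdim
    generalize hα : (A 0 0).re = α at *
    generalize hδ : (A 1 1).re = δ at *
    generalize hbg : A 0 1 = b at *
    rw [hA00, hA11, hc, PhiP_apply]
    have hp0 : p 0 ^ 2 ≤ 1 := by nlinarith [(abs_le.1 (hk 0)).1, (abs_le.1 (hk 0)).2]
    have hp1 : p 1 ^ 2 ≤ 1 := by nlinarith [(abs_le.1 (hk 1)).1, (abs_le.1 (hk 1)).2]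
    have hp2 : p 2 ^ 2 ≤ 1 := by nlinarith [(abs_le.1 (hk 2)).1, (abs_le.1 (hk 2)).2]
    have ha'0 : (0 : ℝ) ≤ ((1 + p 2) * α + (1 - p 2) * δ) / 2 := by
      nlinarith [(abs_le.1 (hk 2)).1, (abs_le.1 (hk 2)).2]
    have hd'0 : (0 : ℝ) ≤ ((1 - p 2) * α + (1 + p 2) * δ) / 2 := by
      nlinarith [(abs_le.1 (hk 2)).1, (abs_le.1 (hk 2)).2]
    have hb'sq : Complex.normSq ((((p 0 : ℂ) + (p 1 : ℂ)) * b
          + ((p 0 : ℂ) - (p 1 : ℂ)) * (starRingEnd ℂ) b) / 2)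
        = p 0 ^ 2 * b.re ^ 2 + p 1 ^ 2 * b.im ^ 2 := by
      simp [Complex.normSq_apply, Complex.add_re, Complex.add_im, Complex.mul_re,
        Complex.mul_im, Complex.div_re, Complex.div_im, Complex.normSq_apply]
      ring
    have hbsq : Complex.normSq b = b.re ^ 2 + b.im ^ 2 := by
      rw [Complex.normSq_apply]; ring
    have hkey : Complex.normSq ((((p 0 : ℂ) + (p 1 : ℂ)) * b
          + ((p 0 : ℂ) - (p 1 : ℂ)) * (starRingEnd ℂ) b) / 2)
        ≤ (((1 + p 2) * α + (1 - p 2) * δ) / 2) * (((1 - p 2) * α + (1 + p 2) * δ) / 2) := by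
      rw [hb'sq]
      have t1 : (0 : ℝ) ≤ (1 - p 0 ^ 2) * b.re ^ 2 := mul_nonneg (by linarith) (sq_nonneg _)
      have t2 : (0 : ℝ) ≤ (1 - p 1 ^ 2) * b.im ^ 2 := mul_nonneg (by linarith) (sq_nonneg _)
      have t3 : (0 : ℝ) ≤ (1 - p 2 ^ 2) * (α - δ) ^ 2 := mul_nonneg (by linarith) (sq_nonneg _)
      have t4 : b.re ^ 2 + b.im ^ 2 ≤ α * δ := by rw [← hbsq]; exact hb
      nlinarith [t1, t2, t3, t4]
    have target := posSemidef_of_entries _ _ _ ha'0 hd'0 hkey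
    have e1 : (((((1 + p 2) * α + (1 - p 2) * δ) / 2 : ℝ)) : ℂ)
        = ((1 + (p 2 : ℂ)) * (α : ℂ) + (1 - (p 2 : ℂ)) * (δ : ℂ)) / 2 := by
      push_cast; ring
    have e2 : (((((1 - p 2) * α + (1 + p 2) * δ) / 2 : ℝ)) : ℂ)
        = ((1 - (p 2 : ℂ)) * (α : ℂ) + (1 + (p 2 : ℂ)) * (δ : ℂ)) / 2 := by
      push_cast; ring
    have e3 : (starRingEnd ℂ) ((((p 0 : ℂ) + (p 1 : ℂ)) * b
          + ((p 0 : ℂ) - (p 1 : ℂ)) * (starRingEnd ℂ) b) / 2)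
        = (((p 0 : ℂ) - (p 1 : ℂ)) * b + ((p 0 : ℂ) + (p 1 : ℂ)) * (starRingEnd ℂ) b) / 2 := by
      simp only [map_div₀, _root_.map_add, _root_.map_mul, _root_.map_sub, Complex.conj_ofReal,
        Complex.conj_conj, map_ofNat]
      ring
    rw [e1, e2, e3] at target
    exact target
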